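/- Let A = kQ/I be the quiver algebra with Q having two vertices 1, 2, arrows a: 1 → 2, b: 2 → 1, a loop y at vertex 1, and I = ⟨yba − bay⟩. Then the center of A is isomorphic to k + (x)k[x,y] where x = ba, i.e., the center is the nonnoetherian ring k[x, xy, xy², …]. -/

import Mathlib

open MvPolynomial

/-- The defining relations of the quiver algebra `A = kQ/⟨yba - bay⟩`, where `Q` has two
vertices `1, 2` (idempotents `e₁ = ι 0`, `e₂ = ι 1`), arrows `a : 1 → 2` (`ι 2`),
`b : 2 → 1` (`ι 3`), and a loop `y` at vertex `1` (`ι 4`). -/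
inductive QuiverRel (k : Type*) [Field k] :
    FreeAlgebra k (Fin 5) → FreeAlgebra k (Fin 5) → Prop
  | unit : QuiverRel k (FreeAlgebra.ι k 0 + FreeAlgebra.ι k 1) 1
  | idem₁ : QuiverRel k (FreeAlgebra.ι k 0 * FreeAlgebra.ι k 0) (FreeAlgebra.ι k 0)
  | idem₂ : QuiverRel k (FreeAlgebra.ι k 1 * FreeAlgebra.ι k 1) (FreeAlgebra.ι k 1)
  | orth₁₂ : QuiverRel k (FreeAlgebra.ι k 0 * FreeAlgebra.ι k 1) 0
  | orth₂₁ : QuiverRel k (FreeAlgebra.ι k 1 * FreeAlgebra.ι k 0) 0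
  | aTail : QuiverRel k (FreeAlgebra.ι k 2 * FreeAlgebra.ι k 0) (FreeAlgebra.ι k 2)
  | aHead : QuiverRel k (FreeAlgebra.ι k 1 * FreeAlgebra.ι k 2) (FreeAlgebra.ι k 2)
  | bTail : QuiverRel k (FreeAlgebra.ι k 3 * FreeAlgebra.ι k 1) (FreeAlgebra.ι k 3)
  | bHead : QuiverRel k (FreeAlgebra.ι k 0 * FreeAlgebra.ι k 3) (FreeAlgebra.ι k 3)
  | yTail : QuiverRel k (FreeAlgebra.ι k 4 * FreeAlgebra.ι k 0) (FreeAlgebra.ι k 4)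
  | yHead : QuiverRel k (FreeAlgebra.ι k 0 * FreeAlgebra.ι k 4) (FreeAlgebra.ι k 4)
  | potential : QuiverRel k
      (FreeAlgebra.ι k 4 * FreeAlgebra.ι k 3 * FreeAlgebra.ι k 2)
      (FreeAlgebra.ι k 3 * FreeAlgebra.ι k 2 * FreeAlgebra.ι k 4)

noncomputable section QuiverCenter

namespace QuiverCenter

variable (k : Type*) [Field k]

abbrev P := MvPolynomial (Fin 2) k

abbrev A := RingQuot (QuiverRel k)

def mk : FreeAlgebra k (Fin 5) →ₐ[k] A k := RingQuot.mkAlgHom k (QuiverRel k)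

def E1 : A k := mk k (FreeAlgebra.ι k 0)
def E2 : A k := mk k (FreeAlgebra.ι k 1)
def Aa : A k := mk k (FreeAlgebra.ι k 2)
def Bb : A k := mk k (FreeAlgebra.ι k 3)
def Yy : A k := mk k (FreeAlgebra.ι k 4)
def Xx : A k := Bb k * Aa k

lemma rel_unit : E1 k + E2 k = 1 := by
  simpa [E1, E2, mk] using RingQuot.mkAlgHom_rel k (QuiverRel.unit (k := k))

lemma e1_e1 : E1 k * E1 k = E1 k := by
  simpa [E1, mk] using RingQuot.mkAlgHom_rel k (QuiverRel.idem₁ (k := k))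
lemma e2_e2 : E2 k * E2 k = E2 k := by
  simpa [E2, mk] using RingQuot.mkAlgHom_rel k (QuiverRel.idem₂ (k := k))
lemma e1_e2 : E1 k * E2 k = 0 := by
  simpa [E1, E2, mk] using RingQuot.mkAlgHom_rel k (QuiverRel.orth₁₂ (k := k))
lemma e2_e1 : E2 k * E1 k = 0 := by
  simpa [E1, E2, mk] using RingQuot.mkAlgHom_rel k (QuiverRel.orth₂₁ (k := k))
lemma a_e1 : Aa k * E1 k = Aa k := by
  simpa [E1, Aa, mk] using RingQuot.mkAlgHom_rel k (QuiverRel.aTail (k := k))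
lemma e2_a : E2 k * Aa k = Aa k := by
  simpa [E2, Aa, mk] using RingQuot.mkAlgHom_rel k (QuiverRel.aHead (k := k))
lemma b_e2 : Bb k * E2 k = Bb k := by
  simpa [E2, Bb, mk] using RingQuot.mkAlgHom_rel k (QuiverRel.bTail (k := k))
lemma e1_b : E1 k * Bb k = Bb k := by
  simpa [E1, Bb, mk] using RingQuot.mkAlgHom_rel k (QuiverRel.bHead (k := k))
lemma y_e1 : Yy k * E1 k = Yy k := by
  simpa [E1, Yy, mk] using RingQuot.mkAlgHom_rel k (QuiverRel.yTail (k := k))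
lemma e1_y : E1 k * Yy k = Yy k := by
  simpa [E1, Yy, mk] using RingQuot.mkAlgHom_rel k (QuiverRel.yHead (k := k))
lemma potential : Yy k * Bb k * Aa k = Bb k * Aa k * Yy k := by
  simpa [Yy, Bb, Aa, mk] using RingQuot.mkAlgHom_rel k (QuiverRel.potential (k := k))

-- derived vanishing lemmas
lemma e1_a : E1 k * Aa k = 0 := by
  rw [← e2_a, ← mul_assoc, e1_e2, zero_mul]
lemma a_e2 : Aa k * E2 k = 0 := by
  rw [← a_e1, mul_assoc, e1_e2, mul_zero]
lemma e2_b : E2 k * Bb k = 0 := by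
  rw [← e1_b, ← mul_assoc, e2_e1, zero_mul]
lemma b_e1 : Bb k * E1 k = 0 := by
  rw [← b_e2, mul_assoc, e2_e1, mul_zero]
lemma e2_y : E2 k * Yy k = 0 := by
  rw [← e1_y, ← mul_assoc, e2_e1, zero_mul]
lemma y_e2 : Yy k * E2 k = 0 := by
  rw [← y_e1, mul_assoc, e1_e2, mul_zero]
lemma a_a : Aa k * Aa k = 0 := by
  nth_rewrite 2 [← e2_a]
  rw [← mul_assoc, a_e2, zero_mul]
lemma b_b : Bb k * Bb k = 0 := by
  nth_rewrite 2 [← e1_b]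
  rw [← mul_assoc, b_e1, zero_mul]
lemma y_a : Yy k * Aa k = 0 := by
  rw [← e2_a, ← mul_assoc, y_e2, zero_mul]
lemma b_y : Bb k * Yy k = 0 := by
  rw [← e1_y, ← mul_assoc, b_e1, zero_mul]
lemma a_y_ne : True := trivial
lemma x_a : Xx k * Aa k = 0 := by
  rw [Xx, mul_assoc, a_a, mul_zero]
lemma b_x : Bb k * Xx k = 0 := by
  rw [Xx, ← mul_assoc, b_b, zero_mul]
lemma x_e2 : Xx k * E2 k = 0 := by
  rw [Xx, mul_assoc, a_e2, mul_zero]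
lemma e2_x : E2 k * Xx k = 0 := by
  rw [Xx, ← mul_assoc, e2_b, zero_mul]
lemma x_e1 : Xx k * E1 k = Xx k := by
  rw [Xx, mul_assoc, a_e1]
lemma e1_x : E1 k * Xx k = Xx k := by
  rw [Xx, ← mul_assoc, e1_b]
lemma y_x : Yy k * Xx k = Xx k * Yy k := by
  rw [Xx, ← mul_assoc, potential]
lemma x_y : Xx k * Yy k = Yy k * Xx k := (y_x k).symm
lemma commute_x_y : Commute (Xx k) (Yy k) := x_y k
lemma commute_e1_y : Commute (E1 k) (Yy k) := by
  unfold Commute SemiconjBy; rw [e1_y, y_e1]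
lemma commute_e2_y : Commute (E2 k) (Yy k) := by
  unfold Commute SemiconjBy; rw [e2_y, y_e2]
lemma commute_e1_x : Commute (E1 k) (Xx k) := by
  unfold Commute SemiconjBy; rw [e1_x, x_e1]
lemma commute_e2_x : Commute (E2 k) (Xx k) := by
  unfold Commute SemiconjBy; rw [e2_x, x_e2]


-- the commutative subalgebra generated by Xx and Yy
def B : Subalgebra k (A k) := Algebra.adjoin k {Xx k, Yy k}

instance : CommSemiring (B k) := by
  apply Algebra.adjoinCommSemiringOfComm
  rintro a (rfl | rfl) b (rfl | rfl)
  · rfl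
  · exact x_y k
  · exact y_x k
  · rfl

instance : @Algebra k (B k) _ (CommSemiring.toSemiring) := (B k).algebra

lemma xB : Xx k ∈ B k := Algebra.subset_adjoin (by left; rfl)
lemma yB : Yy k ∈ B k := Algebra.subset_adjoin (by right; rfl)

def u : P k →ₐ[k] A k :=
  ((B k).val).comp (aeval ![⟨Xx k, xB k⟩, ⟨Yy k, yB k⟩])

lemma u_X0 : u k (X 0) = Xx k := by
  exact congrArg Subtype.val (aeval_X (R := k) ![(⟨Xx k, xB k⟩ : B k), ⟨Yy k, yB k⟩] 0)

lemma u_X1 : u k (X 1) = Yy k := by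
  exact congrArg Subtype.val (aeval_X (R := k) ![(⟨Xx k, xB k⟩ : B k), ⟨Yy k, yB k⟩] 1)

lemma u_C (c : k) : u k (C c) = algebraMap k (A k) c := by
  simp [u]

lemma u_Xi_a (i : Fin 2) : u k (X i) * Aa k = 0 := by
  fin_cases i
  · show u k (X 0) * Aa k = 0; rw [u_X0, x_a]
  · show u k (X 1) * Aa k = 0; rw [u_X1, y_a]

lemma u_Xi_e2 (i : Fin 2) : u k (X i) * E2 k = 0 := by
  fin_cases i
  · show u k (X 0) * E2 k = 0; rw [u_X0, x_e2]
  · show u k (X 1) * E2 k = 0; rw [u_X1, y_e2]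

lemma e2_u_Xi (i : Fin 2) : E2 k * u k (X i) = 0 := by
  fin_cases i
  · show E2 k * u k (X 0) = 0; rw [u_X0, e2_x]
  · show E2 k * u k (X 1) = 0; rw [u_X1, e2_y]

lemma b_u_Xi (i : Fin 2) : Bb k * u k (X i) = 0 := by
  fin_cases i
  · show Bb k * u k (X 0) = 0; rw [u_X0, b_x]
  · show Bb k * u k (X 1) = 0; rw [u_X1, b_y]

lemma K1 (p : P k) : u k p * Aa k = constantCoeff p • Aa k := by
  induction p using MvPolynomial.induction_on with
  | C c => rw [u_C, Algebra.smul_def]; simp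
  | add p q hp hq => rw [map_add, add_mul, hp, hq, map_add, add_smul]
  | mul_X p i hp =>
      rw [map_mul, mul_assoc, u_Xi_a, mul_zero]
      simp

lemma K2 (p : P k) : Bb k * u k p = constantCoeff p • Bb k := by
  induction p using MvPolynomial.induction_on with
  | C c => rw [u_C, ← Algebra.commutes, Algebra.smul_def]; simp
  | add p q hp hq => rw [map_add, mul_add, hp, hq, map_add, add_smul]
  | mul_X p i hp =>
      rw [map_mul, ← mul_assoc, hp, smul_mul_assoc, b_u_Xi, smul_zero]
      simp

lemma K3 (p : P k) : u k p * E2 k = constantCoeff p • E2 k := by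
  induction p using MvPolynomial.induction_on with
  | C c => rw [u_C, Algebra.smul_def]; simp
  | add p q hp hq => rw [map_add, add_mul, hp, hq, map_add, add_smul]
  | mul_X p i hp =>
      rw [map_mul, mul_assoc, u_Xi_e2, mul_zero]
      simp

lemma K4 (p : P k) : E2 k * u k p = constantCoeff p • E2 k := by
  induction p using MvPolynomial.induction_on with
  | C c => rw [u_C, ← Algebra.commutes, Algebra.smul_def]; simp
  | add p q hp hq => rw [map_add, mul_add, hp, hq, map_add, add_smul]
  | mul_X p i hp =>
      rw [map_mul, ← mul_assoc, hp, smul_mul_assoc, e2_u_Xi, smul_zero]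
      simp

def Sset : Set (A k) :=
  ((({E2 k} ∪ Set.range (u k)) ∪ Set.range (fun p => Aa k * u k p))
    ∪ Set.range (fun p => u k p * Bb k)) ∪ Set.range (fun p => Aa k * (u k p * Bb k))

def S : Submodule k (A k) := Submodule.span k (Sset k)

lemma hS2 : E2 k ∈ S k :=
  Submodule.subset_span (by left; left; left; left; rfl)
lemma hSu (p : P k) : u k p ∈ S k :=
  Submodule.subset_span (by left; left; left; right; exact ⟨p, rfl⟩)
lemma hSa (p : P k) : Aa k * u k p ∈ S k :=
  Submodule.subset_span (by left; left; right; exact ⟨p, rfl⟩)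
lemma hSb (p : P k) : u k p * Bb k ∈ S k :=
  Submodule.subset_span (by left; right; exact ⟨p, rfl⟩)
lemma hSab (p : P k) : Aa k * (u k p * Bb k) ∈ S k :=
  Submodule.subset_span (by right; exact ⟨p, rfl⟩)

lemma xx_def : Bb k * Aa k = Xx k := rfl

theorem S_mul_S : ∀ x ∈ Sset k, ∀ w ∈ Sset k, x * w ∈ S k := by
  rintro x hx w hw
  rcases hx with (((hx | ⟨p, rfl⟩) | ⟨p, rfl⟩) | ⟨p, rfl⟩) | ⟨p, rfl⟩ <;>
    [skip; skip; skip; skip; skip] <;>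
    rcases hw with (((hw | ⟨q, rfl⟩) | ⟨q, rfl⟩) | ⟨q, rfl⟩) | ⟨q, rfl⟩
  -- x = E2
  · rw [Set.mem_singleton_iff] at hx hw; subst hx; subst hw
    rw [e2_e2]; exact hS2 k
  · rw [Set.mem_singleton_iff] at hx; subst hx
    rw [K4]; exact Submodule.smul_mem _ _ (hS2 k)
  · rw [Set.mem_singleton_iff] at hx; subst hx
    rw [← mul_assoc, e2_a]; exact hSa k q
  · rw [Set.mem_singleton_iff] at hx; subst hx
    rw [← mul_assoc, K4, smul_mul_assoc, e2_b, smul_zero]; exact zero_mem _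
  · rw [Set.mem_singleton_iff] at hx; subst hx
    rw [← mul_assoc, e2_a]; exact hSab k q
  -- x = u p
  · rw [Set.mem_singleton_iff] at hw; subst hw
    rw [K3]; exact Submodule.smul_mem _ _ (hS2 k)
  · rw [← map_mul]; exact hSu k _
  · rw [← mul_assoc, K1, smul_mul_assoc]; exact Submodule.smul_mem _ _ (hSa k q)
  · rw [← mul_assoc, ← map_mul]; exact hSb k _
  · rw [← mul_assoc, K1, smul_mul_assoc]; exact Submodule.smul_mem _ _ (hSab k q)
  -- x = Aa * u p
  · rw [Set.mem_singleton_iff] at hw; subst hw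
    rw [mul_assoc, K3, mul_smul_comm, a_e2, smul_zero]; exact zero_mem _
  · rw [mul_assoc, ← map_mul]; exact hSa k _
  · rw [mul_assoc, ← mul_assoc (u k p), K1, smul_mul_assoc, mul_smul_comm,
      ← mul_assoc, a_a, zero_mul, smul_zero]; exact zero_mem _
  · rw [mul_assoc, ← mul_assoc (u k p), ← map_mul]; exact hSab k _
  · rw [mul_assoc, ← mul_assoc (u k p), K1, smul_mul_assoc, mul_smul_comm,
      ← mul_assoc, a_a, zero_mul, smul_zero]; exact zero_mem _
  -- x = u p * Bb
  · rw [Set.mem_singleton_iff] at hw; subst hw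
    rw [mul_assoc, b_e2]; exact hSb k p
  · rw [mul_assoc, K2, mul_smul_comm]; exact Submodule.smul_mem _ _ (hSb k p)
  · rw [mul_assoc, ← mul_assoc (Bb k), xx_def, ← u_X0, ← map_mul, ← map_mul]
    exact hSu k _
  · rw [mul_assoc, ← mul_assoc (Bb k), K2, smul_mul_assoc, mul_smul_comm, b_b,
      mul_zero, smul_zero]; exact zero_mem _
  · rw [mul_assoc (u k p) (Bb k), ← mul_assoc (Bb k), xx_def, ← u_X0,
      ← mul_assoc (u k (X 0)), ← map_mul, ← mul_assoc, ← map_mul]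
    exact hSb k _
  -- x = Aa * (u p * Bb)
  · rw [Set.mem_singleton_iff] at hw; subst hw
    rw [mul_assoc, mul_assoc (u k p), b_e2]; exact hSab k p
  · rw [mul_assoc, mul_assoc (u k p), K2, mul_smul_comm, mul_smul_comm]
    exact Submodule.smul_mem _ _ (hSab k p)
  · rw [mul_assoc, mul_assoc (u k p), ← mul_assoc (Bb k), xx_def, ← u_X0,
      ← map_mul, ← map_mul]
    exact hSa k _
  · rw [mul_assoc, mul_assoc (u k p), ← mul_assoc (Bb k), K2, smul_mul_assoc,
      b_b, smul_zero, mul_zero, mul_zero]; exact zero_mem _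
  · rw [mul_assoc, mul_assoc (u k p), ← mul_assoc (Bb k), xx_def, ← u_X0,
      ← mul_assoc (u k (X 0)), ← map_mul, ← mul_assoc (u k p), ← map_mul]
    exact hSab k _

theorem S_mulclosed : ∀ z ∈ S k, ∀ w ∈ S k, z * w ∈ S k := by
  intro z hz
  induction hz using Submodule.span_induction with
  | mem x hx =>
      intro w hw
      induction hw using Submodule.span_induction with
      | mem y hy => exact S_mul_S k x hx y hy
      | zero => rw [mul_zero]; exact zero_mem _
      | add a b ha hb iha ihb => rw [mul_add]; exact add_mem iha ihb
      | smul c a ha ih => rw [mul_smul_comm]; exact Submodule.smul_mem _ _ ih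
  | zero => intro w hw; rw [zero_mul]; exact zero_mem _
  | add a b ha hb iha ihb => intro w hw; rw [add_mul]; exact add_mem (iha w hw) (ihb w hw)
  | smul c a ha ih => intro w hw; rw [smul_mul_assoc]; exact Submodule.smul_mem _ _ (ih w hw)

lemma gen_top :
    Algebra.adjoin k (Set.range fun i => mk k (FreeAlgebra.ι k i)) = ⊤ := by
  have h1 : (Set.range fun i => mk k (FreeAlgebra.ι k i)) =
      (mk k) '' (Set.range (FreeAlgebra.ι k)) := by
    rw [← Set.range_comp]; rfl
  rw [h1, ← AlgHom.map_adjoin, FreeAlgebra.adjoin_range_ι, Algebra.map_top]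
  rw [AlgHom.range_eq_top]
  exact RingQuot.mkAlgHom_surjective k (QuiverRel k)

def SAlg : Subalgebra k (A k) :=
  (S k).toSubalgebra (by rw [show (1 : A k) = u k 1 from (map_one (u k)).symm]; exact hSu k 1)
    (fun x y hx hy => S_mulclosed k x hx y hy)

lemma S_top (z : A k) : z ∈ S k := by
  have h : (⊤ : Subalgebra k (A k)) ≤ SAlg k := by
    rw [← gen_top]
    apply Algebra.adjoin_le
    rintro _ ⟨i, rfl⟩
    fin_cases i
    · show E1 k ∈ S k
      have : E1 k = u k 1 - E2 k := by
        rw [map_one, ← rel_unit, add_sub_cancel_right]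
      rw [this]; exact sub_mem (hSu k 1) (hS2 k)
    · exact hS2 k
    · show Aa k ∈ S k
      have : Aa k = Aa k * u k 1 := by rw [map_one, mul_one]
      rw [this]; exact hSa k 1
    · show Bb k ∈ S k
      have : Bb k = u k 1 * Bb k := by rw [map_one, one_mul]
      rw [this]; exact hSb k 1
    · show Yy k ∈ S k
      rw [← u_X1]; exact hSu k (X 1)
  exact h (by trivial)

-- the matrix representation
def g : Fin 5 → Matrix (Fin 2) (Fin 2) (P k) :=
  ![!![1, 0; 0, 0], !![0, 0; 0, 1], !![0, 0; 1, 0], !![0, X 0; 0, 0], !![X 1, 0; 0, 0]]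

lemma g_rel : ∀ ⦃x y : FreeAlgebra k (Fin 5)⦄, QuiverRel k x y →
    FreeAlgebra.lift k (g k) x = FreeAlgebra.lift k (g k) y := by
  intro x y h
  induction h <;>
    simp [g, FreeAlgebra.lift_ι_apply, Matrix.mul_fin_two, Matrix.one_fin_two] <;>
    simp [funext_iff, Fin.forall_fin_two, ← Matrix.ext_iff, mul_comm]

def tau : A k →ₐ[k] Matrix (Fin 2) (Fin 2) (P k) :=
  RingQuot.liftAlgHom k ⟨FreeAlgebra.lift k (g k), g_rel k⟩

lemma tau_mk (i : Fin 5) : tau k (mk k (FreeAlgebra.ι k i)) = g k i := by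
  rw [tau, mk, RingQuot.liftAlgHom_mkAlgHom_apply, FreeAlgebra.lift_ι_apply]

lemma tau_E1 : tau k (E1 k) = !![1, 0; 0, 0] := tau_mk k 0
lemma tau_E2 : tau k (E2 k) = !![0, 0; 0, 1] := tau_mk k 1
lemma tau_Aa : tau k (Aa k) = !![0, 0; 1, 0] := tau_mk k 2
lemma tau_Bb : tau k (Bb k) = !![0, X 0; 0, 0] := tau_mk k 3
lemma tau_Yy : tau k (Yy k) = !![X 1, 0; 0, 0] := tau_mk k 4
lemma tau_Xx : tau k (Xx k) = !![X 0, 0; 0, 0] := by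
  rw [Xx, map_mul, tau_Bb, tau_Aa, Matrix.mul_fin_two]
  norm_num

lemma tau_u (p : P k) :
    tau k (u k p) = !![p, 0; 0, C (constantCoeff p)] := by
  induction p using MvPolynomial.induction_on with
  | C c =>
      rw [u_C, AlgHom.commutes]
      ext i j
      rw [Matrix.algebraMap_matrix_apply]
      fin_cases i <;> fin_cases j <;> simp [algebraMap_eq]
  | add p q hp hq =>
      rw [map_add (u k), map_add (tau k), hp, hq]
      ext i j; fin_cases i <;> fin_cases j <;> simp
  | mul_X p i hp =>
      rw [map_mul (u k), map_mul (tau k), hp]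
      have hXi : tau k (u k (X i)) = !![(X i : P k), 0; 0, 0] := by
        fin_cases i
        · show tau k (u k (X 0)) = !![(X 0 : P k), 0; 0, 0]; rw [u_X0, tau_Xx]
        · show tau k (u k (X 1)) = !![(X 1 : P k), 0; 0, 0]; rw [u_X1, tau_Yy]
      rw [hXi, Matrix.mul_fin_two]
      have : constantCoeff (p * X i) = 0 := by simp
      rw [this]
      ext a b; fin_cases a <;> fin_cases b <;> simp

-- division by X 0
def d (p : P k) : P k := p.divMonomial (Finsupp.single 0 1)

lemma d_zero : d k 0 = 0 := MvPolynomial.zero_divMonomial _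

lemma d_add (p q : P k) : d k (p + q) = d k p + d k q :=
  MvPolynomial.add_divMonomial p q _

lemma d_smul (c : k) (p : P k) : d k (c • p) = c • d k p := by
  apply MvPolynomial.ext
  intro m
  rw [d, d, MvPolynomial.coeff_divMonomial, MvPolynomial.coeff_smul,
    MvPolynomial.coeff_smul, MvPolynomial.coeff_divMonomial]

lemma d_mul_X0 (p : P k) : d k (p * X 0) = p := MvPolynomial.mul_X_divMonomial p 0

lemma d_C (c : k) : d k (C c) = 0 := by
  apply MvPolynomial.ext
  intro m
  have h : ¬ ((0 : Fin 2 →₀ ℕ) = Finsupp.single (0 : Fin 2) 1 + m) := by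
    intro h'
    have := DFunLike.congr_fun h' 0
    simp [Finsupp.single_apply] at this
    omega
  rw [d, MvPolynomial.coeff_divMonomial]
  simp [MvPolynomial.coeff_C, h]

lemma d_one : d k 1 = 0 := by rw [show (1 : P k) = C 1 by simp, d_C]

def rho (M : Matrix (Fin 2) (Fin 2) (P k)) : A k :=
  u k (M 0 0) - constantCoeff (M 0 0) • E2 k + Aa k * u k (M 1 0)
    + u k (d k (M 0 1)) * Bb k + constantCoeff (M 1 1) • E2 k
    + Aa k * (u k (d k (M 1 1)) * Bb k)

lemma rho_add (M N : Matrix (Fin 2) (Fin 2) (P k)) :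
    rho k (M + N) = rho k M + rho k N := by
  simp only [rho, Matrix.add_apply, d_add, map_add, add_smul, mul_add, add_mul]
  abel

lemma rho_smul (c : k) (M : Matrix (Fin 2) (Fin 2) (P k)) :
    rho k (c • M) = c • rho k M := by
  have hc : ∀ p : P k, constantCoeff (c • p) = c * constantCoeff p := fun p => by
    rw [show constantCoeff (c • p) = MvPolynomial.coeff 0 (c • p) from rfl,
      MvPolynomial.coeff_smul]; rfl
  simp only [rho, Matrix.smul_apply, d_smul, map_smul, hc, mul_smul, smul_sub,
    smul_add, mul_smul_comm, smul_mul_assoc]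

lemma rho_zero : rho k 0 = 0 := by
  simp [rho, d_zero]

lemma tau_fam2 (p : P k) : tau k (Aa k * u k p) = !![0, 0; p, 0] := by
  rw [map_mul, tau_Aa, tau_u, Matrix.mul_fin_two]
  norm_num

lemma tau_fam3 (p : P k) : tau k (u k p * Bb k) = !![0, p * X 0; 0, 0] := by
  rw [map_mul, tau_u, tau_Bb, Matrix.mul_fin_two]
  norm_num

lemma tau_fam4 (p : P k) : tau k (Aa k * (u k p * Bb k)) = !![0, 0; 0, p * X 0] := by
  rw [map_mul, tau_Aa, tau_fam3, Matrix.mul_fin_two]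
  norm_num

lemma rho_tau (z : A k) : rho k (tau k z) = z := by
  have hz : z ∈ S k := S_top k z
  induction hz using Submodule.span_induction with
  | mem x hx =>
      rcases hx with (((hx | ⟨p, rfl⟩) | ⟨p, rfl⟩) | ⟨p, rfl⟩) | ⟨p, rfl⟩
      · rw [Set.mem_singleton_iff] at hx; subst hx
        rw [tau_E2]
        simp [rho, d_zero, d_one, d_C]
      · rw [tau_u]
        simp [rho, d_zero, d_C]
      · rw [tau_fam2]
        simp [rho, d_zero, d_C]
      · rw [tau_fam3]
        simp [rho, d_zero, d_C, d_mul_X0]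
      · rw [tau_fam4]
        simp [rho, d_zero, d_C, d_mul_X0]
  | zero => rw [map_zero, rho_zero]
  | add a b ha hb iha ihb => rw [map_add, rho_add, iha, ihb]
  | smul c a ha ih => rw [map_smul, rho_smul, ih]

lemma tau_inj : Function.Injective (tau k) := fun x y h => by
  rw [← rho_tau k x, h, rho_tau]

-- the central elements  x yⁿ + a yⁿ b
def zc (n : ℕ) : A k := Xx k * Yy k ^ n + Aa k * (Yy k ^ n * Bb k)

lemma yn_e1 (n : ℕ) : Yy k ^ n * E1 k = E1 k * Yy k ^ n :=
  ((commute_e1_y k).pow_right n).symm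

lemma yn_e2 (n : ℕ) : Yy k ^ n * E2 k = E2 k * Yy k ^ n :=
  ((commute_e2_y k).pow_right n).symm

lemma x_yn (n : ℕ) : Xx k * Yy k ^ n = Yy k ^ n * Xx k :=
  (commute_x_y k).pow_right n

variable {n : ℕ}

lemma hE1a (n : ℕ) : Xx k * Yy k ^ n * E1 k = Xx k * Yy k ^ n := by
  rw [mul_assoc, yn_e1, ← mul_assoc, x_e1]
lemma hE1b (n : ℕ) : E1 k * (Xx k * Yy k ^ n) = Xx k * Yy k ^ n := by
  rw [← mul_assoc, e1_x]
lemma hE1c (n : ℕ) : Aa k * (Yy k ^ n * Bb k) * E1 k = 0 := by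
  rw [mul_assoc, mul_assoc, b_e1, mul_zero, mul_zero]
lemma hE1d (n : ℕ) : E1 k * (Aa k * (Yy k ^ n * Bb k)) = 0 := by
  rw [← mul_assoc, e1_a, zero_mul]
lemma hE2a (n : ℕ) : Xx k * Yy k ^ n * E2 k = 0 := by
  rw [mul_assoc, yn_e2, ← mul_assoc, x_e2, zero_mul]
lemma hE2b (n : ℕ) : E2 k * (Xx k * Yy k ^ n) = 0 := by
  rw [← mul_assoc, e2_x, zero_mul]
lemma hE2c (n : ℕ) : Aa k * (Yy k ^ n * Bb k) * E2 k = Aa k * (Yy k ^ n * Bb k) := by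
  rw [mul_assoc, mul_assoc, b_e2]
lemma hE2d (n : ℕ) : E2 k * (Aa k * (Yy k ^ n * Bb k)) = Aa k * (Yy k ^ n * Bb k) := by
  rw [← mul_assoc, e2_a]
lemma hAa1 (n : ℕ) : Xx k * Yy k ^ n * Aa k = 0 := by
  rw [x_yn, mul_assoc, x_a, mul_zero]
lemma hAa2 (n : ℕ) : Aa k * (Yy k ^ n * Bb k) * Aa k = Aa k * (Xx k * Yy k ^ n) := by
  rw [mul_assoc, mul_assoc, xx_def, ← x_yn]
lemma hBb1 (n : ℕ) : Bb k * (Xx k * Yy k ^ n) = 0 := by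
  rw [← mul_assoc, b_x, zero_mul]
lemma hBb2 (n : ℕ) : Bb k * (Aa k * (Yy k ^ n * Bb k)) = Xx k * Yy k ^ n * Bb k := by
  rw [← mul_assoc, xx_def, ← mul_assoc]
lemma hBb3 (n : ℕ) : Aa k * (Yy k ^ n * Bb k) * Bb k = 0 := by
  rw [mul_assoc, mul_assoc, b_b, mul_zero, mul_zero]
lemma hYy1 (n : ℕ) : Yy k * (Xx k * Yy k ^ n) = Xx k * Yy k ^ (n + 1) := by
  rw [← mul_assoc, y_x, mul_assoc, ← pow_succ']
lemma hYy2 (n : ℕ) : Xx k * Yy k ^ n * Yy k = Xx k * Yy k ^ (n + 1) := by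
  rw [mul_assoc, ← pow_succ]
lemma hYy3 (n : ℕ) : Aa k * (Yy k ^ n * Bb k) * Yy k = 0 := by
  rw [mul_assoc, mul_assoc, b_y, mul_zero, mul_zero]
lemma hYy4 (n : ℕ) : Yy k * (Aa k * (Yy k ^ n * Bb k)) = 0 := by
  rw [← mul_assoc, y_a, zero_mul]

lemma zc_central (n : ℕ) : zc k n ∈ Subalgebra.center k (A k) := by
  rw [Subalgebra.mem_center_iff]
  intro w
  have hw : w ∈ Subalgebra.centralizer k {zc k n} := by
    have h : (⊤ : Subalgebra k (A k)) ≤ Subalgebra.centralizer k {zc k n} := by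
      rw [← gen_top]
      apply Algebra.adjoin_le
      rintro _ ⟨i, rfl⟩
      simp only [SetLike.mem_coe]
      rw [Subalgebra.mem_centralizer_iff]
      rintro _ rfl
      fin_cases i
      · show zc k n * E1 k = E1 k * zc k n
        rw [zc, add_mul, mul_add, hE1a, hE1c, add_zero, hE1b, hE1d, add_zero]
      · show zc k n * E2 k = E2 k * zc k n
        rw [zc, add_mul, mul_add, hE2a, zero_add, hE2c, hE2b, zero_add, hE2d]
      · show zc k n * Aa k = Aa k * zc k n
        rw [zc, add_mul, mul_add, hAa1, zero_add, hAa2,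
          ← mul_assoc (Aa k) (Aa k), a_a, zero_mul, add_zero]
      · show zc k n * Bb k = Bb k * zc k n
        rw [zc, add_mul, mul_add, hBb3, add_zero, hBb1, zero_add, hBb2]
      · show zc k n * Yy k = Yy k * zc k n
        rw [zc, add_mul, mul_add, hYy2, hYy3, add_zero, hYy1, hYy4, add_zero]
    exact h (by trivial)
  exact ((Subalgebra.mem_centralizer_iff k).1 hw (zc k n) rfl).symm

def Cub : Subalgebra k (P k) :=
  Algebra.adjoin k {p : P k | ∃ n : ℕ, p = X 0 * X 1 ^ n}

lemma X0_mul_mem (q : P k) : X 0 * q ∈ Cub k := by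
  have key : ∀ q : P k, ∀ m : ℕ, X 0 * X 1 ^ m * q ∈ Cub k := by
    intro q
    induction q using MvPolynomial.induction_on with
    | C c =>
        intro m
        rw [mul_comm]
        exact mul_mem (Subalgebra.algebraMap_mem _ c) (Algebra.subset_adjoin ⟨m, rfl⟩)
    | add p q hp hq => intro m; rw [mul_add]; exact add_mem (hp m) (hq m)
    | mul_X p i hp =>
        intro m
        fin_cases i
        · show X 0 * X 1 ^ m * (p * X 0) ∈ Cub k
          rw [show X 0 * X 1 ^ m * (p * X 0) = X 0 * X 1 ^ m * p * X 0 by ring]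
          exact mul_mem (hp m) (Algebra.subset_adjoin ⟨0, by rw [pow_zero, mul_one]⟩)
        · show X 0 * X 1 ^ m * (p * X 1) ∈ Cub k
          rw [show X 0 * X 1 ^ m * (p * X 1) = X 0 * X 1 ^ (m + 1) * p by ring]
          exact hp (m + 1)
  simpa using key q 0

def D : Subalgebra k (Matrix (Fin 2) (Fin 2) (P k)) where
  carrier := {M | M 0 1 ∈ Ideal.span {(X 0 : P k)} ∧ M 1 1 ∈ Cub k}
  mul_mem' := by
    rintro M N ⟨hM1, hM2⟩ ⟨hN1, hN2⟩
    constructor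
    · have h : (M * N) 0 1 = M 0 0 * N 0 1 + M 0 1 * N 1 1 := by
        rw [Matrix.mul_apply, Fin.sum_univ_two]
      rw [h]
      exact add_mem (Ideal.mul_mem_left _ _ hN1) (Ideal.mul_mem_right _ _ hM1)
    · have h : (M * N) 1 1 = M 1 0 * N 0 1 + M 1 1 * N 1 1 := by
        rw [Matrix.mul_apply, Fin.sum_univ_two]
      rw [h]
      refine add_mem ?_ (mul_mem hM2 hN2)
      obtain ⟨r, hr⟩ := Ideal.mem_span_singleton'.1 hN1
      rw [← hr, show M 1 0 * (r * X 0) = X 0 * (M 1 0 * r) by ring]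
      exact X0_mul_mem k _
  one_mem' := by
    constructor
    · show (1 : Matrix (Fin 2) (Fin 2) (P k)) 0 1 ∈ _
      simp [Matrix.one_apply]
    · show (1 : Matrix (Fin 2) (Fin 2) (P k)) 1 1 ∈ _
      simp only [Matrix.one_apply, if_pos rfl]
      exact one_mem _
  add_mem' := by
    rintro M N ⟨hM1, hM2⟩ ⟨hN1, hN2⟩
    exact ⟨add_mem hM1 hN1, add_mem hM2 hN2⟩
  zero_mem' := by
    exact ⟨by simp, by simpa using zero_mem (Cub k)⟩
  algebraMap_mem' := fun c => by
    constructor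
    · rw [Matrix.algebraMap_matrix_apply]
      simp
    · rw [Matrix.algebraMap_matrix_apply]
      simp only [if_pos rfl]
      exact Subalgebra.algebraMap_mem _ c

lemma tau_mem_D (w : A k) : tau k w ∈ D k := by
  have h : (⊤ : Subalgebra k (A k)) ≤ (D k).comap (tau k) := by
    rw [← gen_top]
    apply Algebra.adjoin_le
    rintro _ ⟨i, rfl⟩
    simp only [SetLike.mem_coe, Subalgebra.mem_comap]
    fin_cases i <;>
      · rw [tau_mk]
        refine ⟨?_, ?_⟩ <;> simp [g] <;>
          first
            | exact zero_mem _
            | exact one_mem _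
            | exact Ideal.subset_span rfl
  exact h (by trivial)

lemma central_mat {z : A k} (hz : z ∈ Subalgebra.center k (A k)) :
    tau k z 0 1 = 0 ∧ tau k z 1 0 = 0 ∧ tau k z 0 0 = tau k z 1 1 := by
  have h2 : tau k (E2 k) * tau k z = tau k z * tau k (E2 k) := by
    rw [← map_mul, ← map_mul, Subalgebra.mem_center_iff.1 hz (E2 k)]
  have ha : tau k (Aa k) * tau k z = tau k z * tau k (Aa k) := by
    rw [← map_mul, ← map_mul, Subalgebra.mem_center_iff.1 hz (Aa k)]
  rw [tau_E2] at h2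
  rw [tau_Aa] at ha
  have e01 := congrFun (congrFun h2 0) 1
  have e10 := congrFun (congrFun h2 1) 0
  have ed := congrFun (congrFun ha 1) 0
  simp [Matrix.mul_apply, Fin.sum_univ_two] at e01 e10 ed
  exact ⟨e01.symm, e10, ed⟩

lemma central_form {z : A k} (hz : z ∈ Subalgebra.center k (A k)) :
    tau k z = !![tau k z 1 1, 0; 0, tau k z 1 1] := by
  obtain ⟨h01, h10, hd⟩ := central_mat k hz
  apply Matrix.ext
  intro i j
  fin_cases i <;> fin_cases j
  · show tau k z 0 0 = _; rw [hd]; simp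
  · show tau k z 0 1 = _; rw [h01]; simp
  · show tau k z 1 0 = _; rw [h10]; simp
  · show tau k z 1 1 = _; simp

def psi : Subalgebra.center k (A k) →ₐ[k] P k where
  toFun z := tau k z.1 1 1
  map_one' := by
    show tau k ((1 : Subalgebra.center k (A k)) : A k) 1 1 = 1
    rw [OneMemClass.coe_one, map_one]
    simp [Matrix.one_apply]
  map_mul' := fun z w => by
    show tau k ((z : A k) * (w : A k)) 1 1 = tau k z.1 1 1 * tau k w.1 1 1
    rw [map_mul, Matrix.mul_apply, Fin.sum_univ_two, (central_mat k z.2).2.1,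
      zero_mul, zero_add]
  map_zero' := by
    show tau k ((0 : Subalgebra.center k (A k)) : A k) 1 1 = 0
    rw [ZeroMemClass.coe_zero, map_zero]
    rfl
  map_add' := fun z w => by
    show tau k ((z : A k) + (w : A k)) 1 1 = tau k z.1 1 1 + tau k w.1 1 1
    rw [map_add]
    rfl
  commutes' := fun c => by
    show tau k ((algebraMap k (Subalgebra.center k (A k)) c : _) : A k) 1 1 = _
    rw [SubalgebraClass.coe_algebraMap, AlgHom.commutes, Matrix.algebraMap_matrix_apply]
    simp

lemma psi_inj : Function.Injective (psi k) := by
  intro z w h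
  apply Subtype.ext
  apply tau_inj k
  rw [central_form k z.2, central_form k w.2]
  have h' : tau k z.1 1 1 = tau k w.1 1 1 := h
  rw [h']

lemma tau_Yy_pow (n : ℕ) :
    tau k (Yy k ^ n) = !![X 1 ^ n, 0; 0, if n = 0 then 1 else 0] := by
  induction n with
  | zero =>
      rw [pow_zero, map_one, Matrix.one_fin_two]
      norm_num
  | succ m ih =>
      rw [pow_succ, map_mul, ih, tau_Yy, Matrix.mul_fin_two]
      norm_num [pow_succ]

lemma psi_zc (n : ℕ) : psi k ⟨zc k n, zc_central k n⟩ = X 0 * X 1 ^ n := by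
  show tau k (zc k n) 1 1 = X 0 * X 1 ^ n
  have h1 : tau k (Xx k * Yy k ^ n) = !![X 0 * X 1 ^ n, 0; 0, 0] := by
    rw [map_mul, tau_Xx, tau_Yy_pow, Matrix.mul_fin_two]
    norm_num
  have h2 : tau k (Aa k * (Yy k ^ n * Bb k)) = !![0, 0; 0, X 1 ^ n * X 0] := by
    rw [map_mul, map_mul, tau_Aa, tau_Yy_pow, tau_Bb, Matrix.mul_fin_two,
      Matrix.mul_fin_two]
    norm_num
  rw [zc, map_add, h1, h2]
  have : (!![X 0 * X 1 ^ n, 0; 0, 0] + !![0, 0; 0, X 1 ^ n * X 0] :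
      Matrix (Fin 2) (Fin 2) (P k)) 1 1 = 0 + X 1 ^ n * X 0 := by
    simp
  rw [this, zero_add, mul_comm]

lemma psi_range : (psi k).range = Cub k := by
  apply le_antisymm
  · rintro p ⟨z, rfl⟩
    exact (tau_mem_D k z.1).2
  · apply Algebra.adjoin_le
    rintro _ ⟨n, rfl⟩
    simp only [SetLike.mem_coe]
    exact ⟨⟨zc k n, zc_central k n⟩, psi_zc k n⟩

end QuiverCenter

end QuiverCenter

/-- The center of the quiver algebra `A = kQ/⟨yba - bay⟩` is isomorphic to the
nonnoetherian ring `k + x·k[x,y] = k[x, xy, xy², …]` (with `x = ba`). -/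
theorem stmt_19 (k : Type*) [Field k] :
    Nonempty
      ((Subalgebra.center k (RingQuot (QuiverRel k))) ≃ₐ[k]
        (Algebra.adjoin k
          {p : MvPolynomial (Fin 2) k | ∃ n : ℕ, p = X 0 * X 1 ^ n})) := by
  exact ⟨(AlgEquiv.ofInjective (QuiverCenter.psi k) (QuiverCenter.psi_inj k)).trans
    (Subalgebra.equivOfEq _ _ (QuiverCenter.psi_range k))⟩
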